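/- Greedy achieves (1−1/e) for monotone submodular maximization under cardinality constraint: if f : Finset Ω → ℝ is monotone, submodular, and f(∅) = 0, and S_k is the set built by greedily adding, at each of k steps, an element maximizing the marginal gain, then f(S_k) ≥ (1 − (1 − 1/k)^k)·max_{|T|≤k} f(T) ≥ (1 − 1/e)·max_{|T|≤k} f(T). -/

import Mathlib

theorem greedy_submodular_approximation {Ω : Type*} [DecidableEq Ω]
    (f : Finset Ω → ℝ)
    (hmono : ∀ A B : Finset Ω, A ⊆ B → f A ≤ f B)
    (hsub : ∀ (A B : Finset Ω) (x : Ω), A ⊆ B → x ∉ B →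
      f (insert x B) - f B ≤ f (insert x A) - f A)
    (hempty : f ∅ = 0)
    (k : ℕ) (hk : 1 ≤ k)
    (S : ℕ → Finset Ω) (hS0 : S 0 = ∅)
    (hgreedy : ∀ i, ∃ x, S (i + 1) = insert x (S i) ∧
      ∀ y, f (insert y (S i)) - f (S i) ≤ f (insert x (S i)) - f (S i)) :
    ∀ T : Finset Ω, T.card ≤ k →
      (1 - (1 - 1 / (k : ℝ)) ^ k) * f T ≤ f (S k) ∧
      (1 - 1 / Real.exp 1) * f T ≤ (1 - (1 - 1 / (k : ℝ)) ^ k) * f T := by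
  intro T hT
  have hT0 : 0 ≤ f T := by
    have := hmono ∅ T (Finset.empty_subset T); linarith [this, hempty.symm ▸ this]
  have hk0 : (0:ℝ) < k := by exact_mod_cast hk
  have hc0 : 0 ≤ 1 - 1/(k:ℝ) := by
    have : 1/(k:ℝ) ≤ 1 := by
      rw [div_le_one hk0]; exact_mod_cast hk
    linarith
  -- submodular sum bound
  have hsum : ∀ (A B : Finset Ω), f (A ∪ B) - f A ≤ ∑ x ∈ B, (f (insert x A) - f A) := by
    intro A B
    induction B using Finset.induction_on with
    | empty => simp
    | @insert x B hx ih =>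
      rw [Finset.sum_insert hx, Finset.union_insert]
      by_cases hxA : x ∈ A ∪ B
      · have h1 : insert x (A ∪ B) = A ∪ B := Finset.insert_eq_self.mpr hxA
        have h2 : 0 ≤ f (insert x A) - f A := by
          have := hmono A (insert x A) (Finset.subset_insert x A); linarith
        rw [h1]; linarith
      · have h3 := hsub A (A ∪ B) x Finset.subset_union_left hxA
        linarith
  -- one-step bound
  have hstep : ∀ i, f T - f (S i) ≤ k * (f (S (i+1)) - f (S i)) := by
    intro i
    obtain ⟨x, hx1, hx2⟩ := hgreedy i
    have hδ0 : 0 ≤ f (S (i+1)) - f (S i) := by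
      rw [hx1]
      have := hmono (S i) (insert x (S i)) (Finset.subset_insert _ _); linarith
    have h1 : f T ≤ f (S i ∪ T) := hmono _ _ Finset.subset_union_right
    have h2 := hsum (S i) T
    have h3 : ∑ y ∈ T, (f (insert y (S i)) - f (S i)) ≤ T.card * (f (S (i+1)) - f (S i)) := by
      rw [hx1]
      calc ∑ y ∈ T, (f (insert y (S i)) - f (S i))
          ≤ ∑ _y ∈ T, (f (insert x (S i)) - f (S i)) :=
            Finset.sum_le_sum (fun y _ => hx2 y)
        _ = T.card * (f (insert x (S i)) - f (S i)) := by
            rw [Finset.sum_const, nsmul_eq_mul]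
    have h4 : (T.card : ℝ) * (f (S (i+1)) - f (S i)) ≤ k * (f (S (i+1)) - f (S i)) := by
      apply mul_le_mul_of_nonneg_right _ hδ0
      exact_mod_cast hT
    linarith
  -- main induction
  have hmain : ∀ i, f T - f (S i) ≤ (1 - 1/(k:ℝ))^i * f T := by
    intro i
    induction i with
    | zero => simp [hS0, hempty]
    | succ i ih =>
      have h1 := hstep i
      have h2 : f T - f (S (i+1)) ≤ (1 - 1/(k:ℝ)) * (f T - f (S i)) := by
        have h3 : (f T - f (S i))/(k:ℝ) ≤ f (S (i+1)) - f (S i) := by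
          rw [div_le_iff₀ hk0]; linarith
        have h4 : (1 - 1/(k:ℝ)) * (f T - f (S i))
            = (f T - f (S i)) - (f T - f (S i))/(k:ℝ) := by
          field_simp
        rw [h4]; linarith
      calc f T - f (S (i+1)) ≤ (1 - 1/(k:ℝ)) * (f T - f (S i)) := h2
        _ ≤ (1 - 1/(k:ℝ)) * ((1 - 1/(k:ℝ))^i * f T) := mul_le_mul_of_nonneg_left ih hc0
        _ = (1 - 1/(k:ℝ))^(i+1) * f T := by ring
  constructor
  · have h := hmain k
    have hx : (1 - (1 - 1/(k:ℝ))^k) * f T = f T - (1 - 1/(k:ℝ))^k * f T := by ring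
    rw [hx]; linarith
  · have hek : (1 - 1/(k:ℝ))^k ≤ 1/Real.exp 1 := by
      have h1 : (1 - 1/(k:ℝ)) ≤ Real.exp (-(1/(k:ℝ))) := by
        have := Real.add_one_le_exp (-(1/(k:ℝ))); linarith
      have h2 : (1 - 1/(k:ℝ))^k ≤ (Real.exp (-(1/(k:ℝ))))^k :=
        pow_le_pow_left₀ hc0 h1 k
      have h3 : (Real.exp (-(1/(k:ℝ))))^k = Real.exp (-1) := by
        rw [← Real.exp_nat_mul]
        congr 1
        field_simp
      rw [h3, Real.exp_neg, ← one_div] at h2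
      exact h2
    have : 1 - 1/Real.exp 1 ≤ 1 - (1 - 1/(k:ℝ))^k := by linarith
    exact mul_le_mul_of_nonneg_right this hT0
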